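/- Let n ≥ 1 and let f, g ∈ ℝ[x₁,…,xₙ] be polynomials with non-negative coefficients such that f(x) = 1 and g(x) = 1 whenever x₁ + ⋯ + xₙ = 1. Suppose the constant coefficient of f is zero, f has total degree p ≥ 1 and the coefficient of x₁^p in f is positive, g has total degree d, and the coefficient c of x₁^d in g is positive. Define Wg = g + c·x₁^d·(f − 1). Then: Wg has non-negative coefficients; Wg(x) = 1 whenever x₁ + ⋯ + xₙ = 1; Wg has total degree d + p and the coefficient of x₁^{d+p} in Wg is positive; the support of Wg has cardinality equal to |support(g)| + |support(f)| − 1; and, for any integer q ≥ 1 and weights w ∈ ℕⁿ, if every α in the support of f and every α in the support of g satisfies q ∣ (w₁α₁ + ⋯ + wₙαₙ), then so does every α in the support of Wg. -/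

import Mathlib

open MvPolynomial

/-- The tensoring operator `W` from the proof of Theorem 1:
`Wg = g + c·x₁^d·(f − 1)` has non-negative coefficients, equals `1` on the
hyperplane, has total degree `d + p` with positive pure coefficient of `x₁^{d+p}`,
its rank is `rank(g) + rank(f) − 1`, and it preserves weighted-congruence conditions
on the support. -/
theorem stmt_5 (n : ℕ) (hn : 1 ≤ n) (f g : MvPolynomial (Fin n) ℝ) (p d : ℕ) (hp : 1 ≤ p)
    (hfnn : ∀ α, 0 ≤ f.coeff α) (hgnn : ∀ α, 0 ≤ g.coeff α)
    (hf1 : ∀ x : Fin n → ℝ, (∑ i, x i) = 1 → eval x f = 1)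
    (hg1 : ∀ x : Fin n → ℝ, (∑ i, x i) = 1 → eval x g = 1)
    (hf0 : f.coeff 0 = 0)
    (hfdeg : f.totalDegree = p)
    (hfpure : 0 < f.coeff (Finsupp.single ⟨0, hn⟩ p))
    (hgdeg : g.totalDegree = d)
    (hgpure : 0 < g.coeff (Finsupp.single ⟨0, hn⟩ d)) :
    letI c : ℝ := g.coeff (Finsupp.single ⟨0, hn⟩ d)
    letI Wg : MvPolynomial (Fin n) ℝ := g + C c * (X ⟨0, hn⟩) ^ d * (f - 1)
    (∀ α, 0 ≤ Wg.coeff α) ∧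
    (∀ x : Fin n → ℝ, (∑ i, x i) = 1 → eval x Wg = 1) ∧
    Wg.totalDegree = d + p ∧
    0 < Wg.coeff (Finsupp.single ⟨0, hn⟩ (d + p)) ∧
    Wg.support.card = g.support.card + f.support.card - 1 ∧
    (∀ (q : ℕ) (w : Fin n → ℕ), 1 ≤ q →
      (∀ α ∈ f.support, q ∣ ∑ i, w i * α i) →
      (∀ α ∈ g.support, q ∣ ∑ i, w i * α i) →
      ∀ α ∈ Wg.support, q ∣ ∑ i, w i * α i) := by
  set c : ℝ := g.coeff (Finsupp.single ⟨0, hn⟩ d) with hcdef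
  set Wg : MvPolynomial (Fin n) ℝ := g + C c * (X ⟨0, hn⟩) ^ d * (f - 1) with hWgdef
  set i0 : Fin n := ⟨0, hn⟩ with hi0
  set s : Fin n →₀ ℕ := Finsupp.single i0 d with hs
  have hc : 0 < c := hgpure
  -- degree as finite sum
  have hdeg : ∀ α : Fin n →₀ ℕ, (α.sum fun _ e => e) = ∑ i, α i :=
    fun α => Finsupp.sum_fintype _ _ (fun _ => rfl)
  have hssum : (s.sum fun _ e => e) = d := by
    rw [hs, Finsupp.sum_single_index]; rfl
  -- coefficient formula
  have hcoeff : ∀ α, Wg.coeff α =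
      g.coeff α + (if s ≤ α then c * f.coeff (α - s) else 0) - (if α = s then c else 0) := by
    intro α
    have : Wg = g + (monomial s c) * (f - 1) := by
      rw [hs, ← C_mul_X_pow_eq_monomial]
    rw [this, coeff_add, mul_sub, coeff_sub, mul_one, coeff_monomial_mul', coeff_monomial]
    by_cases h1 : s ≤ α
    · by_cases h2 : α = s
      · subst h2
        simp [tsub_self, hf0, hcdef]
      · have h3 : α - s ≠ 0 := by
          intro h
          exact h2 (le_antisymm (tsub_eq_zero_iff_le.mp h) h1)
        have h4 : s ≠ α := fun h => h2 h.symm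
        simp [h1, h2, h3, h4, mul_sub]
    · have h4 : s ≠ α := fun h => h1 (h ▸ le_rfl)
      have h2 : α ≠ s := fun h => h4 h.symm
      simp [h1, h2, h4]
  -- facts about supports
  have hgle : ∀ α ∈ g.support, (∑ i, α i) ≤ d := by
    intro α hα
    rw [← hdeg, ← hgdeg]; exact le_totalDegree hα
  have hfle : ∀ γ ∈ f.support, (∑ i, γ i) ≤ p := by
    intro γ hγ
    rw [← hdeg, ← hfdeg]; exact le_totalDegree hγ
  have hf0s : (0 : Fin n →₀ ℕ) ∉ f.support := by
    simp [hf0]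
  have hsg : s ∈ g.support := by
    rw [mem_support_iff]; exact ne_of_gt hgpure
  have hssum' : (∑ i, s i) = d := by rw [← hdeg]; exact hssum
  -- sum of a shifted index
  have hshift : ∀ γ : Fin n →₀ ℕ, (∑ i, (s + γ) i) = d + ∑ i, γ i := by
    intro γ
    simp [Finsupp.add_apply, Finset.sum_add_distrib, hssum']
  -- in g.support and ≥ s forces = s
  have hgs : ∀ α ∈ g.support, s ≤ α → α = s := by
    intro α hα hle
    have h1 : α = s + (α - s) := (add_tsub_cancel_of_le hle).symm
    have h2 : (∑ i, α i) = d + ∑ i, (α - s) i := by rw [h1, hshift]; simp [← h1]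
    have h3 : (∑ i, (α - s) i) = 0 := by
      have := hgle α hα
      omega
    have h4 : α - s = 0 := by
      ext i
      have := Finset.sum_eq_zero_iff.mp h3 i (Finset.mem_univ i)
      simpa using this
    rw [h1, h4, add_zero]
  -- shifted f support elements have degree > d, hence not in g.support
  have hfshift : ∀ γ ∈ f.support, d < ∑ i, (s + γ) i := by
    intro γ hγ
    have hγ0 : γ ≠ 0 := fun h => hf0s (h ▸ hγ)
    have : 0 < ∑ i, γ i := by
      rcases Finsupp.ne_iff.mp hγ0 with ⟨i, hi⟩
      have : 0 < γ i := Nat.pos_of_ne_zero (by simpa using hi)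
      exact lt_of_lt_of_le this (Finset.single_le_sum (fun j _ => Nat.zero_le _) (Finset.mem_univ i))
    rw [hshift]; omega
  -- support characterization
  have hsupp : Wg.support = (g.support.erase s) ∪ f.support.image (fun γ => s + γ) := by
    ext α
    simp only [mem_support_iff, Finset.mem_union, Finset.mem_erase, Finset.mem_image]
    constructor
    · intro hne
      rw [hcoeff] at hne
      by_cases h2 : α = s
      · exfalso; apply hne; subst h2; simp [tsub_self, hf0, hcdef]
      · by_cases h1 : s ≤ α
        · by_cases h3 : f.coeff (α - s) = 0
          · left
            refine ⟨h2, ?_⟩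
            simpa [h1, h2, h3] using hne
          · right
            exact ⟨α - s, h3, add_tsub_cancel_of_le h1⟩
        · left
          refine ⟨h2, ?_⟩
          simpa [h1, h2] using hne
    · rintro (⟨h2, hα⟩ | ⟨γ, hγ, rfl⟩)
      · have h1 : ¬ s ≤ α := fun h => h2 (hgs α (mem_support_iff.mpr hα) h)
        rw [hcoeff]; simpa [h1, h2] using hα
      · have h1 : s ≤ s + γ := le_add_of_nonneg_right zero_le
        have hγ0 : γ ≠ 0 := fun h => hγ (h ▸ hf0)
        have h2 : s + γ ≠ s := fun h => hγ0 (by simpa using h)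
        have hgz : g.coeff (s + γ) = 0 := by
          by_contra h
          exact absurd (hgle _ (mem_support_iff.mpr h)) (not_le.mpr (hfshift γ (mem_support_iff.mpr hγ)))
        rw [hcoeff]
        have : f.coeff (s + γ - s) ≠ 0 := by
          rw [add_tsub_cancel_left]; exact hγ
        simp only [h1, if_true, h2, if_false, hgz, zero_add, sub_zero]
        exact mul_ne_zero (ne_of_gt hc) this
  have hdisj : Disjoint (g.support.erase s) (f.support.image (fun γ => s + γ)) := by
    rw [Finset.disjoint_right]
    rintro α hα hα'
    rcases Finset.mem_image.mp hα with ⟨γ, hγ, rfl⟩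
    exact absurd (hgle _ (Finset.mem_of_mem_erase hα')) (not_le.mpr (hfshift γ hγ))
  have hinj : Set.InjOn (fun γ => s + γ) f.support := fun a _ b _ h => by
    simpa using h
  -- nonnegativity
  refine ⟨?_, ?_, ?_, ?_, ?_, ?_⟩
  · intro α
    rw [hcoeff]
    by_cases h2 : α = s
    · subst h2; simp [tsub_self, hf0, hcdef]
    · by_cases h1 : s ≤ α
      · simp only [h1, if_true, h2, if_false, sub_zero]
        exact add_nonneg (hgnn α) (mul_nonneg hc.le (hfnn _))
      · simp only [h1, if_false, h2, sub_zero, add_zero]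
        exact hgnn α
  · intro x hx
    show eval x (g + C c * X i0 ^ d * (f - 1)) = 1
    simp [hg1 x hx, hf1 x hx]
  · -- total degree
    apply le_antisymm
    · apply Finset.sup_le
      intro α hα
      rw [hdeg]
      rw [hsupp] at hα
      rcases Finset.mem_union.mp hα with h | h
      · exact le_trans (hgle _ (Finset.mem_of_mem_erase h)) (Nat.le_add_right d p)
      · rcases Finset.mem_image.mp h with ⟨γ, hγ, rfl⟩
        rw [hshift]
        exact Nat.add_le_add_left (hfle γ hγ) d
    · have hmem : Finsupp.single i0 (d + p) ∈ Wg.support := by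
        rw [hsupp]
        apply Finset.mem_union_right
        apply Finset.mem_image.mpr
        exact ⟨Finsupp.single i0 p, mem_support_iff.mpr (ne_of_gt hfpure),
          by rw [hs, ← Finsupp.single_add]⟩
      have := le_totalDegree hmem
      rwa [hdeg, show (∑ i, Finsupp.single i0 (d+p) i) = d + p from by
        rw [← hdeg, Finsupp.sum_single_index]; rfl] at this
  · -- positive pure coefficient
    rw [hcoeff]
    have h1 : s ≤ Finsupp.single i0 (d + p) := by
      rw [hs, Finsupp.single_le_iff, Finsupp.single_eq_same]; omega
    have h2 : Finsupp.single i0 (d + p) ≠ s := by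
      rw [hs]
      intro h
      have := congrArg (fun m => m i0) h
      simp at this
      omega
    have h3 : Finsupp.single i0 (d + p) - s = Finsupp.single i0 p := by
      rw [hs, show Finsupp.single i0 (d + p) = Finsupp.single i0 d + Finsupp.single i0 p from
        Finsupp.single_add i0 d p, add_tsub_cancel_left]
    have hgz : g.coeff (Finsupp.single i0 (d + p)) = 0 := by
      by_contra h
      have := hgle _ (mem_support_iff.mpr h)
      rw [show (∑ i, Finsupp.single i0 (d+p) i) = d + p from by
        rw [← hdeg, Finsupp.sum_single_index]; rfl] at this
      omega
    rw [hgz, if_pos h1, if_neg h2, h3, zero_add, sub_zero]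
    exact mul_pos hc hfpure
  · -- cardinality
    rw [hsupp, Finset.card_union_of_disjoint hdisj, Finset.card_erase_of_mem hsg,
      Finset.card_image_of_injOn hinj]
    have h1 : 1 ≤ g.support.card := Finset.card_pos.mpr ⟨s, hsg⟩
    omega
  · -- congruence
    intro q w hq hfc hgc α hα
    rw [hsupp] at hα
    rcases Finset.mem_union.mp hα with h | h
    · exact hgc α (Finset.mem_of_mem_erase h)
    · rcases Finset.mem_image.mp h with ⟨γ, hγ, rfl⟩
      have : (∑ i, w i * (s + γ) i) = (∑ i, w i * s i) + ∑ i, w i * γ i := by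
        simp [Finsupp.add_apply, Nat.mul_add, Finset.sum_add_distrib]
      rw [this]
      exact dvd_add (hgc s hsg) (hfc γ hγ)
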